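/- Let T be a finite set, let (p_j)_{j∈T} be strictly positive reals, let s > 0, and let r be an integer with 0 ≤ r ≤ |T|. Then Φ_r := Σ_{U ⊆ T} (−1)^{|U|−r} binom(|U|, r) / ((|U|+2)(s + p_U)) > 0, where p_U = Σ_{j∈U} p_j and binom(|U|, r) = 0 when |U| < r. -/

import Mathlib

open Finset MeasureTheory intervalIntegral

/-- Reindexing lemma: expand the binomial coefficient as a sum over `r`-subsets. -/
private lemma lemA {ι : Type*} [DecidableEq ι] (T : Finset ι) (r : ℕ) (f : Finset ι → ℝ) :
    ∑ U ∈ T.powerset, (-1 : ℝ) ^ (U.card - r) * (U.card.choose r : ℝ) * f U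
      = ∑ S ∈ T.powersetCard r, ∑ V ∈ (T \ S).powerset, (-1 : ℝ) ^ V.card * f (S ∪ V) := by
  have h1 : ∀ U ∈ T.powerset,
      (-1 : ℝ) ^ (U.card - r) * (U.card.choose r : ℝ) * f U
        = ∑ _S ∈ U.powersetCard r, (-1 : ℝ) ^ (U.card - r) * f U := by
    intro U _
    rw [Finset.sum_const, nsmul_eq_mul, Finset.card_powersetCard]
    ring
  rw [Finset.sum_congr rfl h1]
  rw [Finset.sum_comm' (t' := T.powersetCard r)
    (s' := fun S => T.powerset.filter (fun U => S ⊆ U)) ?_]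
  · refine Finset.sum_congr rfl fun S hS => ?_
    rw [Finset.mem_powersetCard] at hS
    refine Finset.sum_bij' (i := fun U _ => U \ S) (j := fun V _ => S ∪ V)
      ?_ ?_ ?_ ?_ ?_
    · intro U hU
      rw [Finset.mem_filter, Finset.mem_powerset] at hU
      exact Finset.mem_powerset.2 (Finset.sdiff_subset_sdiff hU.1 Finset.Subset.rfl)
    · intro V hV
      rw [Finset.mem_powerset] at hV
      rw [Finset.mem_filter, Finset.mem_powerset]
      exact ⟨Finset.union_subset hS.1 (hV.trans (Finset.sdiff_subset)),
        Finset.subset_union_left⟩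
    · intro U hU
      rw [Finset.mem_filter] at hU
      exact Finset.union_sdiff_of_subset hU.2
    · intro V hV
      rw [Finset.mem_powerset] at hV
      exact Finset.union_sdiff_cancel_left
        (Finset.disjoint_of_subset_right hV Finset.disjoint_sdiff)
    · intro U hU
      rw [Finset.mem_filter] at hU
      rw [Finset.card_sdiff_of_subset hU.2, hS.2, Finset.union_sdiff_of_subset hU.2]
  · intro U S
    simp only [Finset.mem_powerset, Finset.mem_powersetCard, Finset.mem_filter]
    constructor
    · rintro ⟨hUT, hSU, hSr⟩
      exact ⟨⟨hUT, hSU⟩, hSU.trans hUT, hSr⟩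
    · rintro ⟨⟨hUT, hSU⟩, _, hSr⟩
      exact ⟨hUT, hSU, hSr⟩

/-- The inner positivity result, proved via a double integral representation. -/
private lemma lemB {ι : Type*} [DecidableEq ι] (W : Finset ι) (p : ι → ℝ) (hp : ∀ j ∈ W, 0 < p j)
    (c : ℝ) (hc : 0 < c) (n : ℕ) :
    0 < ∑ V ∈ W.powerset, (-1 : ℝ) ^ V.card *
      (1 / (((n : ℝ) + V.card + 2) * (c + ∑ j ∈ V, p j))) := by
  have hpV : ∀ V ∈ W.powerset, 0 ≤ ∑ j ∈ V, p j := by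
    intro V hV
    rw [Finset.mem_powerset] at hV
    exact Finset.sum_nonneg fun j hj => (hp j (hV hj)).le
  have hA : ∀ V : Finset ι, (0:ℝ) < (n : ℝ) + V.card + 2 := by
    intro V; positivity
  -- the function of t whose integral over (0,1) is the sum
  set h : ℝ → ℝ := fun t => ∑ V ∈ W.powerset,
    ((-1 : ℝ) ^ V.card / ((n : ℝ) + V.card + 2)) * t ^ (c + (∑ j ∈ V, p j) - 1) with hh
  have hint : ∀ V ∈ W.powerset, IntervalIntegrable
      (fun t : ℝ => ((-1 : ℝ) ^ V.card / ((n : ℝ) + V.card + 2)) *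
        t ^ (c + (∑ j ∈ V, p j) - 1)) volume 0 1 := by
    intro V hV
    exact (intervalIntegral.intervalIntegrable_rpow'
      (by have := hpV V hV; linarith)).const_mul _
  have hinth : IntervalIntegrable h volume 0 1 := by
    have hfun : h = ∑ V ∈ W.powerset, (fun t : ℝ =>
        ((-1 : ℝ) ^ V.card / ((n : ℝ) + V.card + 2)) * t ^ (c + (∑ j ∈ V, p j) - 1)) := by
      funext t; rw [hh]; simp [Finset.sum_apply]
    rw [hfun]
    exact IntervalIntegrable.sum _ hint
  -- value of the integral
  have hval : ∫ t in (0:ℝ)..1, h t = ∑ V ∈ W.powerset, (-1 : ℝ) ^ V.card *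
      (1 / (((n : ℝ) + V.card + 2) * (c + ∑ j ∈ V, p j))) := by
    rw [hh]
    rw [intervalIntegral.integral_finset_sum hint]
    refine Finset.sum_congr rfl fun V hV => ?_
    have hq : (-1:ℝ) < c + (∑ j ∈ V, p j) - 1 := by have := hpV V hV; linarith
    have hq0 : (0:ℝ) < c + ∑ j ∈ V, p j := by have := hpV V hV; linarith
    rw [intervalIntegral.integral_const_mul, integral_rpow (Or.inl hq)]
    have h1 : c + (∑ j ∈ V, p j) - 1 + 1 = c + ∑ j ∈ V, p j := by ring
    rw [h1, Real.one_rpow, Real.zero_rpow (ne_of_gt hq0)]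
    field_simp
    norm_num
  rw [← hval]
  -- positivity of h on (0,1)
  refine intervalIntegral.intervalIntegral_pos_of_pos_on hinth ?_ one_pos
  intro t ht
  obtain ⟨ht0, ht1⟩ := ht
  -- rewrite h t as t^(c-1) times an integral of a positive function
  have key : ∀ V ∈ W.powerset,
      ∫ x in (0:ℝ)..1, (-1:ℝ) ^ V.card * t ^ (∑ j ∈ V, p j) * x ^ (n + 1 + V.card)
        = (-1:ℝ) ^ V.card * t ^ (∑ j ∈ V, p j) / ((n : ℝ) + V.card + 2) := by
    intro V _
    rw [intervalIntegral.integral_const_mul, integral_pow]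
    have : ((n + 1 + V.card : ℕ) : ℝ) + 1 = (n : ℝ) + V.card + 2 := by push_cast; ring
    rw [one_pow, zero_pow (by omega), this]
    ring
  have hexpand : ∀ x : ℝ, x ^ (n + 1) * ∏ j ∈ W, (1 - x * t ^ (p j))
      = ∑ V ∈ W.powerset, (-1:ℝ) ^ V.card * t ^ (∑ j ∈ V, p j) * x ^ (n + 1 + V.card) := by
    intro x
    have := Finset.prod_add (fun j => -(x * t ^ (p j))) (fun _ => (1:ℝ)) W
    simp only [neg_add_eq_sub] at this
    rw [this, Finset.mul_sum]
    refine Finset.sum_congr rfl fun V hV => ?_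
    rw [Finset.mem_powerset] at hV
    rw [Finset.prod_const, one_pow, mul_one]
    have hprod : ∏ j ∈ V, -(x * t ^ (p j))
        = (-1:ℝ) ^ V.card * x ^ V.card * t ^ (∑ j ∈ V, p j) := by
      rw [Real.rpow_sum_of_pos ht0 p V]
      have : ∀ j ∈ V, -(x * t ^ (p j)) = (-1) * x * (t ^ (p j)) := fun j _ => by ring
      rw [Finset.prod_congr rfl this, Finset.prod_mul_distrib, Finset.prod_const, mul_pow]
    rw [hprod, pow_add]
    ring
  have hcont : Continuous fun x : ℝ => x ^ (n + 1) * ∏ j ∈ W, (1 - x * t ^ (p j)) := by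
    exact (continuous_pow _).mul (continuous_finset_prod _ fun j _ =>
      (continuous_const.sub (continuous_id.mul continuous_const)))
  have hIpos : 0 < ∫ x in (0:ℝ)..1, x ^ (n + 1) * ∏ j ∈ W, (1 - x * t ^ (p j)) := by
    refine intervalIntegral.intervalIntegral_pos_of_pos_on
      (hcont.intervalIntegrable 0 1) ?_ one_pos
    intro x hx
    obtain ⟨hx0, hx1⟩ := hx
    refine mul_pos (pow_pos hx0 _) (Finset.prod_pos fun j hj => ?_)
    have h1 : t ^ (p j) < 1 := Real.rpow_lt_one ht0.le ht1 (hp j hj)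
    have h2 : 0 ≤ t ^ (p j) := Real.rpow_nonneg ht0.le _
    nlinarith
  have hIval : ∫ x in (0:ℝ)..1, x ^ (n + 1) * ∏ j ∈ W, (1 - x * t ^ (p j))
      = ∑ V ∈ W.powerset, (-1:ℝ) ^ V.card * t ^ (∑ j ∈ V, p j) / ((n : ℝ) + V.card + 2) := by
    rw [show (fun x : ℝ => x ^ (n + 1) * ∏ j ∈ W, (1 - x * t ^ (p j)))
        = fun x : ℝ => ∑ V ∈ W.powerset,
          (-1:ℝ) ^ V.card * t ^ (∑ j ∈ V, p j) * x ^ (n + 1 + V.card) from by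
      funext x; exact hexpand x]
    rw [intervalIntegral.integral_finset_sum (f := fun V x =>
        (-1:ℝ) ^ V.card * t ^ (∑ j ∈ V, p j) * x ^ (n + 1 + V.card)) (fun V _ =>
      (((continuous_const.mul (continuous_pow _))).intervalIntegrable 0 1))]
    exact Finset.sum_congr rfl key
  have hht : h t = t ^ (c - 1) *
      ∫ x in (0:ℝ)..1, x ^ (n + 1) * ∏ j ∈ W, (1 - x * t ^ (p j)) := by
    rw [hIval, hh, Finset.mul_sum]
    refine Finset.sum_congr rfl fun V _ => ?_
    have : t ^ (c + (∑ j ∈ V, p j) - 1) = t ^ (c - 1) * t ^ (∑ j ∈ V, p j) := by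
      rw [← Real.rpow_add ht0]; ring_nf
    rw [this]
    ring
  rw [hht]
  exact mul_pos (Real.rpow_pos_of_pos ht0 _) hIpos

/-- Strict positivity of `Φ_r`: for a finite set `T` with strictly positive
weights `p_j`, `s > 0` and `0 ≤ r ≤ |T|`,
`Φ_r = Σ_{U⊆T} (-1)^{|U|-r} binom(|U|,r) / ((|U|+2)(s+p_U)) > 0`
(with `binom(|U|,r) = 0` for `|U| < r` and `p_U = Σ_{j∈U} p_j`). -/
theorem Phi_pos {ι : Type*} [DecidableEq ι] (T : Finset ι)
    (p : ι → ℝ) (hp : ∀ j ∈ T, 0 < p j) (s : ℝ) (hs : 0 < s)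
    (r : ℕ) (hr : r ≤ T.card) :
    0 < ∑ U ∈ T.powerset,
        (-1 : ℝ) ^ (U.card - r) * (U.card.choose r : ℝ) /
          (((U.card : ℝ) + 2) * (s + ∑ j ∈ U, p j)) := by
  have hrw : ∀ U ∈ T.powerset,
      (-1 : ℝ) ^ (U.card - r) * (U.card.choose r : ℝ) /
          (((U.card : ℝ) + 2) * (s + ∑ j ∈ U, p j))
        = (-1 : ℝ) ^ (U.card - r) * (U.card.choose r : ℝ) *
          (1 / (((U.card : ℝ) + 2) * (s + ∑ j ∈ U, p j))) := by
    intro U _; rw [mul_one_div]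
  rw [Finset.sum_congr rfl hrw,
    lemA T r (fun U => 1 / (((U.card : ℝ) + 2) * (s + ∑ j ∈ U, p j)))]
  refine Finset.sum_pos ?_ (Finset.powersetCard_nonempty.2 hr)
  intro S hS
  rw [Finset.mem_powersetCard] at hS
  have hc : 0 < s + ∑ j ∈ S, p j :=
    add_pos_of_pos_of_nonneg hs (Finset.sum_nonneg fun j hj => (hp j (hS.1 hj)).le)
  have hterm : ∀ V ∈ (T \ S).powerset,
      (-1 : ℝ) ^ V.card *
        (1 / ((((S ∪ V).card : ℝ) + 2) * (s + ∑ j ∈ S ∪ V, p j)))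
      = (-1 : ℝ) ^ V.card *
        (1 / (((r : ℝ) + V.card + 2) * ((s + ∑ j ∈ S, p j) + ∑ j ∈ V, p j))) := by
    intro V hV
    rw [Finset.mem_powerset] at hV
    have hdisj : Disjoint S V :=
      Finset.disjoint_of_subset_right hV Finset.disjoint_sdiff
    rw [Finset.card_union_of_disjoint hdisj, Finset.sum_union hdisj, hS.2]
    push_cast
    ring_nf
  rw [Finset.sum_congr rfl hterm]
  exact lemB (T \ S) p (fun j hj => hp j (Finset.sdiff_subset hj)) _ hc r
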